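/- For each positive integer n and a > 0, with c = a+b, ρ_n(b) = (b)_n/(c)_n and λ_n(b) = ψ(c) − ψ(b) + ψ(n+b) − ψ(n+c), one has lim_{b→0⁺} ρ_n(b)·λ_n(b) = (n−1)!/(a)_n. -/
import Mathlib

open Real Filter Set

noncomputable def poch (x : ℝ) (n : ℕ) : ℝ := (ascPochhammer ℝ n).eval x

noncomputable def hyp (a b c x : ℝ) : ℝ :=
  ∑' n : ℕ, poch a n * poch b n / (poch c n * n.factorial) * x ^ n

noncomputable def digamma (x : ℝ) : ℝ := deriv Real.Gamma x / Real.Gamma x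

lemma ne_neg_nat {x : ℝ} (hx : 0 < x) : ∀ m : ℕ, x ≠ -m := by
  intro m h
  have : (0:ℝ) ≤ m := Nat.cast_nonneg m
  nlinarith

lemma ne_neg_nat' {x : ℝ} (hx : 0 < x) : ∀ m : ℕ, (x:ℂ) ≠ -m := by
  intro m h
  have := congrArg Complex.re h
  simp at this
  have : (0:ℝ) ≤ m := Nat.cast_nonneg m
  nlinarith [ne_neg_nat hx m]

lemma contAt_derivGamma {x : ℝ} (hx : 0 < x) : ContinuousAt (deriv Real.Gamma) x := by
  have hU : IsOpen {s : ℂ | 0 < s.re} := isOpen_lt continuous_const Complex.continuous_re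
  have hA : AnalyticOnNhd ℂ Complex.Gamma {s : ℂ | 0 < s.re} := by
    apply DifferentiableOn.analyticOnNhd _ hU
    intro s hs
    refine (Complex.differentiableAt_Gamma s ?_).differentiableWithinAt
    intro m h
    rw [h] at hs
    simp at hs
    have : (0:ℝ) ≤ m := Nat.cast_nonneg m
    linarith [hs]
  have hD : AnalyticOnNhd ℂ (deriv Complex.Gamma) {s : ℂ | 0 < s.re} := hA.deriv
  have hC : ContinuousAt (fun y : ℝ => (deriv Complex.Gamma y).re) x := by
    have h1 : ContinuousAt (deriv Complex.Gamma) (x : ℂ) :=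
      (hD x (by simpa using hx)).continuousAt
    exact Complex.continuous_re.continuousAt.comp
      (h1.comp Complex.continuous_ofReal.continuousAt)
  refine hC.congr ?_
  filter_upwards [Ioi_mem_nhds hx] with y hy
  exact (((Complex.differentiableAt_Gamma _ (ne_neg_nat' hy)).hasDerivAt).real_of_complex).deriv.symm

lemma contAt_digamma {x : ℝ} (hx : 0 < x) : ContinuousAt digamma x := by
  have hG : ContinuousAt Real.Gamma x :=
    (Real.differentiableAt_Gamma (ne_neg_nat hx)).continuousAt
  exact (contAt_derivGamma hx).div hG (Real.Gamma_pos_of_pos hx).ne'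

lemma derivGamma_add_one {x : ℝ} (hx : 0 < x) :
    deriv Real.Gamma (x + 1) = Real.Gamma x + x * deriv Real.Gamma x := by
  have h1 : HasDerivAt (fun y : ℝ => Real.Gamma (y + 1)) (deriv Real.Gamma (x + 1) * 1) x :=
    (Real.differentiableAt_Gamma (ne_neg_nat (by linarith))).hasDerivAt.comp x
      ((hasDerivAt_id x).add_const 1)
  have h2 : HasDerivAt (fun y : ℝ => y * Real.Gamma y)
      (1 * Real.Gamma x + x * deriv Real.Gamma x) x :=
    (hasDerivAt_id x).mul (Real.differentiableAt_Gamma (ne_neg_nat hx)).hasDerivAt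
  have heq : (fun y : ℝ => Real.Gamma (y + 1)) =ᶠ[nhds x] fun y : ℝ => y * Real.Gamma y := by
    filter_upwards [Ioi_mem_nhds hx] with y hy
    exact Real.Gamma_add_one (ne_of_gt hy)
  have h2' : HasDerivAt (fun y : ℝ => Real.Gamma (y + 1))
      (1 * Real.Gamma x + x * deriv Real.Gamma x) x := h2.congr_of_eventuallyEq heq
  have := h2'.unique h1
  simp only [one_mul, mul_one] at this
  linarith

lemma digamma_rec {x : ℝ} (hx : 0 < x) : digamma x = digamma (x + 1) - 1/x := by
  have hG : Real.Gamma x ≠ 0 := (Real.Gamma_pos_of_pos hx).ne'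
  have h1 : Real.Gamma (x + 1) = x * Real.Gamma x := Real.Gamma_add_one (ne_of_gt hx)
  rw [digamma, digamma, derivGamma_add_one hx, h1]
  field_simp
  ring

theorem stmt5 (a : ℝ) (ha : 0 < a) (n : ℕ) (hn : 1 ≤ n) :
    Filter.Tendsto (fun b : ℝ =>
      poch b n / poch (a + b) n *
        (digamma (a + b) - digamma b + digamma (n + b) - digamma (n + a + b)))
      (nhdsWithin 0 (Set.Ioi 0))
      (nhds ((n - 1).factorial / poch a n)) := by
  set G : ℝ → ℝ := fun b =>
    poch b n / poch (a + b) n *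
      (digamma (a + b) - digamma (b + 1) + digamma (n + b) - digamma (n + a + b))
      + poch (b + 1) (n - 1) / poch (a + b) n with hGdef
  have hpoch : ∀ b : ℝ, poch b n = b * poch (b + 1) (n - 1) := by
    intro b
    have : n = (n - 1) + 1 := (Nat.succ_pred_eq_of_pos hn).symm
    rw [this, poch, ascPochhammer_succ_left]
    simp [poch, Polynomial.eval_comp]
  have hcongr : ∀ b ∈ Ioi (0:ℝ),
      poch b n / poch (a + b) n *
        (digamma (a + b) - digamma b + digamma (n + b) - digamma (n + a + b)) = G b := by
    intro b hb
    have hb' : (0:ℝ) < b := hb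
    have hab : poch (a + b) n ≠ 0 := (ascPochhammer_pos n _ (by linarith)).ne'
    have hb0 : b ≠ 0 := hb'.ne'
    simp only [hGdef]
    rw [digamma_rec hb', hpoch b]
    field_simp
    ring
  have hGc : ContinuousAt G 0 := by
    have hpc : ∀ m : ℕ, Continuous fun x : ℝ => poch x m := fun m =>
      (ascPochhammer ℝ m).continuous
    have c1 : ContinuousAt (fun b : ℝ => digamma (a + b)) 0 :=
      (contAt_digamma (by simpa using ha)).comp (by fun_prop)
    have c2 : ContinuousAt (fun b : ℝ => digamma (b + 1)) 0 :=
      (contAt_digamma (by norm_num)).comp (by fun_prop)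
    have c3 : ContinuousAt (fun b : ℝ => digamma (n + b)) 0 := by
      refine (contAt_digamma ?_).comp (by fun_prop)
      simp only [add_zero]
      exact_mod_cast Nat.lt_of_lt_of_le Nat.zero_lt_one hn
    have c4 : ContinuousAt (fun b : ℝ => digamma (n + a + b)) 0 := by
      refine (contAt_digamma ?_).comp (by fun_prop)
      have : (0:ℝ) < n := by exact_mod_cast Nat.lt_of_lt_of_le Nat.zero_lt_one hn
      simpa using by linarith
    have hane : poch a n ≠ 0 := (ascPochhammer_pos n a ha).ne'
    refine ContinuousAt.add (ContinuousAt.mul ?_ ?_) ?_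
    · exact ContinuousAt.div ((hpc n).continuousAt)
        (((hpc n).comp (by fun_prop : Continuous fun b : ℝ => a + b)).continuousAt)
        (by simpa using hane)
    · exact ((c1.sub c2).add c3).sub c4
    · exact ContinuousAt.div
        (((hpc (n-1)).comp (by fun_prop : Continuous fun b : ℝ => b + 1)).continuousAt)
        (((hpc n).comp (by fun_prop : Continuous fun b : ℝ => a + b)).continuousAt)
        (by simpa using hane)
  have hG0 : G 0 = (n - 1).factorial / poch a n := by
    have h0 : poch 0 n = 0 := by
      rw [poch, ascPochhammer_eval_zero, if_neg (by omega)]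
    have h1 : poch 1 (n - 1) = (n - 1).factorial := by
      rw [poch]; exact_mod_cast ascPochhammer_eval_one ℝ (n - 1)
    simp [hGdef, h0, h1]
  have : Tendsto G (nhdsWithin 0 (Ioi 0)) (nhds ((n - 1).factorial / poch a n)) := by
    rw [← hG0]
    exact hGc.continuousWithinAt.tendsto
  exact this.congr' (by filter_upwards [self_mem_nhdsWithin] with b hb; exact (hcongr b hb).symm)
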